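/- Let M be a subspace of ℝ^{m×n}, let X* ∈ M have rank r and ‖X*‖_F = 1, and let P ∈ ℝ^{m×m} and Q ∈ ℝ^{n×n} be the orthogonal projections onto the orthogonal complements of the column space of X* and of the column space of X*ᵀ, respectively. If the nontangential intersection condition holds, i.e., every X ∈ M with P X Q = 0 is a scalar multiple of X*, then X* is an isolated point of the set {X ∈ M : rank(X) ≤ r, ‖X‖_F = 1}: there exists δ > 0 such that the only matrices X with X ∈ M, rank(X) ≤ r, ‖X‖_F = 1 and ‖X − X*‖_F < δ are X = X* itself. -/

import Mathlib

open Matrix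

/-- Frobenius norm of a real matrix. -/
noncomputable def frobNorm {m n : ℕ} (X : Matrix (Fin m) (Fin n) ℝ) : ℝ :=
  Real.sqrt (∑ i, ∑ j, (X i j) ^ 2)

section Aux

attribute [local instance] Matrix.frobeniusSeminormedAddCommGroup
  Matrix.frobeniusNormedAddCommGroup Matrix.frobeniusNormedSpace
  Matrix.frobeniusNormedRing Matrix.frobeniusNormedAlgebra

private lemma rank_def' {m n : ℕ} (X : Matrix (Fin m) (Fin n) ℝ) :
    X.rank = Module.finrank ℝ (LinearMap.range X.mulVecLin) := rfl

private lemma frobNorm_eq {m n : ℕ} (X : Matrix (Fin m) (Fin n) ℝ) :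
    frobNorm X = ‖X‖ := by
  rw [frobNorm, Matrix.frobenius_norm_def, Real.sqrt_eq_rpow]
  congr 1
  refine Finset.sum_congr rfl fun i _ => Finset.sum_congr rfl fun j _ => ?_
  rw [Real.norm_eq_abs, Real.rpow_two, sq_abs]

private lemma sum_sq_eq_norm_sq {m n : ℕ} (X : Matrix (Fin m) (Fin n) ℝ) :
    ∑ i, ∑ j, (X i j) ^ 2 = ‖X‖ ^ 2 := by
  rw [← frobNorm_eq, frobNorm, Real.sq_sqrt (by positivity)]

private lemma norm3_bound {m n p q : ℕ} (A : Matrix (Fin m) (Fin n) ℝ)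
    (B : Matrix (Fin n) (Fin p) ℝ) (C : Matrix (Fin p) (Fin q) ℝ) :
    ‖A * B * C‖ ≤ ‖A‖ * ‖B‖ * ‖C‖ :=
  (Matrix.frobenius_norm_mul _ _).trans
    (mul_le_mul_of_nonneg_right (Matrix.frobenius_norm_mul _ _) (norm_nonneg _))

private lemma cur_identity {m n r : ℕ} (X : Matrix (Fin m) (Fin n) ℝ)
    (A : Matrix (Fin m) (Fin r) ℝ) (B : Matrix (Fin n) (Fin r) ℝ)
    (hX : X.rank ≤ r) (h : IsUnit (Aᵀ * X * B)) :
    X = X * B * (Aᵀ * X * B)⁻¹ * (Aᵀ * X) := by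
  have hassoc : Aᵀ * X * B = Aᵀ * (X * B) := by rw [Matrix.mul_assoc]
  have hr1 : r ≤ (X * B).rank := by
    have h2 := Matrix.rank_mul_le_right Aᵀ (X * B)
    rw [← hassoc, Matrix.rank_of_isUnit _ h, Fintype.card_fin] at h2
    exact h2
  have hle : LinearMap.range (X * B).mulVecLin ≤ LinearMap.range X.mulVecLin := by
    rw [Matrix.mulVecLin_mul]
    exact LinearMap.range_comp_le_range _ _
  have heq : LinearMap.range (X * B).mulVecLin = LinearMap.range X.mulVecLin :=
    Submodule.eq_of_le_of_finrank_le hle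
      (by rw [← rank_def', ← rank_def']; exact le_trans hX hr1)
  have hcol : ∀ j, ∃ c : Fin r → ℝ, (X * B).mulVec c = fun i => X i j := by
    intro j
    have : (fun i => X i j) ∈ LinearMap.range X.mulVecLin :=
      ⟨Pi.single j 1, by ext i; simp [Matrix.mulVecLin, Matrix.mulVec_single]⟩
    rw [← heq] at this
    obtain ⟨c, hc⟩ := this
    exact ⟨c, hc⟩
  choose c hc using hcol
  set C : Matrix (Fin r) (Fin n) ℝ := Matrix.of (fun k j => c j k) with hC
  have hXC : X * B * C = X := by
    ext i j
    have := congrFun (hc j) i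
    simpa [Matrix.mul_apply, Matrix.mulVec, dotProduct, hC] using this
  have hinv : (Aᵀ * X * B)⁻¹ * (Aᵀ * X * B) = 1 :=
    Matrix.nonsing_inv_mul _ ((Matrix.isUnit_iff_isUnit_det _).mp h)
  have h1 : X * B * (Aᵀ * X * B)⁻¹ * (Aᵀ * (X * B * C)) = X * B * C := by
    rw [show Aᵀ * (X * B * C) = (Aᵀ * X * B) * C by simp only [Matrix.mul_assoc],
        show X * B * (Aᵀ * X * B)⁻¹ * ((Aᵀ * X * B) * C)
            = X * B * ((Aᵀ * X * B)⁻¹ * (Aᵀ * X * B)) * C by simp only [Matrix.mul_assoc],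
        hinv, Matrix.mul_one]
  rw [hXC] at h1
  exact h1.symm

private lemma exists_core {m n r : ℕ} (Xs : Matrix (Fin m) (Fin n) ℝ) (hrank : Xs.rank = r) :
    ∃ (A : Matrix (Fin m) (Fin r) ℝ) (B : Matrix (Fin n) (Fin r) ℝ),
      IsUnit (Aᵀ * Xs * B) := by
  classical
  set p := LinearMap.range Xs.mulVecLin with hp
  have hfr : Module.finrank ℝ p = r := by rw [← rank_def', hrank]
  let b : Module.Basis (Fin r) ℝ p := Module.finBasisOfFinrankEq ℝ p hfr
  set A : Matrix (Fin m) (Fin r) ℝ := Matrix.of (fun i k => (b k : Fin m → ℝ) i) with hA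
  have hAmul : ∀ v : Fin r → ℝ, A.mulVec v = ((∑ k, v k • b k : p) : Fin m → ℝ) := by
    intro v
    ext i
    simp only [Matrix.mulVec, dotProduct, hA, Matrix.of_apply]
    rw [show ((∑ k, v k • b k : p) : Fin m → ℝ) = ∑ k, v k • ((b k : Fin m → ℝ)) by
      simp [Submodule.coe_sum]]
    simp [Finset.sum_apply, mul_comm]
  have hAinj : ∀ v : Fin r → ℝ, A.mulVec v = 0 → v = 0 := by
    intro v hv
    rw [hAmul] at hv
    have hz : (∑ k, v k • b k : p) = 0 := Subtype.ext (by simpa using hv)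
    have := Fintype.linearIndependent_iff.mp b.linearIndependent v hz
    exact funext this
  have hcolA : ∀ j, ∃ cj : Fin r → ℝ, A.mulVec cj = fun i => Xs i j := by
    intro j
    have hmem : (fun i => Xs i j) ∈ p :=
      ⟨Pi.single j 1, by ext i; simp [Matrix.mulVecLin, Matrix.mulVec_single]⟩
    refine ⟨fun k => b.repr ⟨_, hmem⟩ k, ?_⟩
    rw [hAmul]
    have := b.sum_repr ⟨_, hmem⟩
    rw [this]
  choose c hc using hcolA
  set C : Matrix (Fin r) (Fin n) ℝ := Matrix.of (fun k j => c j k) with hC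
  have hXC : A * C = Xs := by
    ext i j
    have := congrFun (hc j) i
    simpa [Matrix.mul_apply, Matrix.mulVec, dotProduct, hC] using this
  have hrC : (C : Matrix (Fin r) (Fin n) ℝ).rank = r := by
    have h1 : r ≤ C.rank := by
      have := Matrix.rank_mul_le_right A C
      rw [hXC, hrank] at this
      exact this
    have h2 : C.rank ≤ r := by
      have := Matrix.rank_le_card_height C
      simpa using this
    omega
  have hCtinj : ∀ v : Fin r → ℝ, Cᵀ.mulVec v = 0 → v = 0 := by
    intro v hv
    have hker : LinearMap.ker Cᵀ.mulVecLin = ⊥ := by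
      have hrt : Cᵀ.rank = r := by rw [Matrix.rank_transpose, hrC]
      have := LinearMap.finrank_range_add_finrank_ker Cᵀ.mulVecLin
      rw [← rank_def', hrt, Module.finrank_fin_fun] at this
      have hk0 : Module.finrank ℝ (LinearMap.ker Cᵀ.mulVecLin) = 0 := by omega
      exact Submodule.finrank_eq_zero.mp hk0
    have : v ∈ LinearMap.ker Cᵀ.mulVecLin := LinearMap.mem_ker.mpr hv
    rw [hker] at this
    simpa using this
  refine ⟨A, Cᵀ, ?_⟩
  rw [← Matrix.mulVec_injective_iff_isUnit]
  intro v w hvw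
  suffices hker : ∀ u : Fin r → ℝ, (Aᵀ * Xs * Cᵀ).mulVec u = 0 → u = 0 by
    have hsub : (Aᵀ * Xs * Cᵀ).mulVec (v - w) = 0 := by
      rw [Matrix.mulVec_sub, hvw, sub_self]
    exact sub_eq_zero.mp (hker _ hsub)
  intro u hu
  have hdecomp : (Aᵀ * Xs * Cᵀ).mulVec u = Aᵀ.mulVec (A.mulVec (C.mulVec (Cᵀ.mulVec u))) := by
    rw [← hXC]
    simp only [← Matrix.mulVec_mulVec, Matrix.mul_assoc]
  rw [hdecomp] at hu
  set y := C.mulVec (Cᵀ.mulVec u) with hy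
  have hz : A.mulVec y = 0 := by
    have hdot : (A.mulVec y) ⬝ᵥ (A.mulVec y) = 0 := by
      rw [Matrix.dotProduct_mulVec, ← Matrix.mulVec_transpose, hu, zero_dotProduct]
    rw [← dotProduct_self_eq_zero]
    exact hdot
  have hy0 : y = 0 := hAinj _ hz
  have hw0 : Cᵀ.mulVec u = 0 := by
    have hdot : (Cᵀ.mulVec u) ⬝ᵥ (Cᵀ.mulVec u) = 0 := by
      rw [Matrix.dotProduct_mulVec, ← Matrix.mulVec_transpose, Matrix.transpose_transpose,
        ← hy, hy0, zero_dotProduct]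
    rw [← dotProduct_self_eq_zero]
    exact hdot
  exact hCtinj _ hw0

set_option maxHeartbeats 1600000 in
/-- Under the nontangential intersection condition, `X*` is an isolated point of
the set of unit-Frobenius-norm matrices of rank at most `r` in `M`: there is
`δ > 0` such that the only `X ∈ M` with `rank X ≤ r`, `‖X‖_F = 1` and
`‖X − X*‖_F < δ` is `X = X*`. -/
theorem isolated_of_nontangential {m n r : ℕ}
    (M : Submodule ℝ (Matrix (Fin m) (Fin n) ℝ))
    (Xs : Matrix (Fin m) (Fin n) ℝ) (hXsM : Xs ∈ M)
    (hrank : Xs.rank = r) (hnorm : frobNorm Xs = 1)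
    (P : Matrix (Fin m) (Fin m) ℝ) (Q : Matrix (Fin n) (Fin n) ℝ)
    (hPsymm : Pᵀ = P) (hPidem : P * P = P)
    (hPker : ∀ v : Fin m → ℝ, P.mulVec v = 0 ↔ v ∈ LinearMap.range Xs.mulVecLin)
    (hQsymm : Qᵀ = Q) (hQidem : Q * Q = Q)
    (hQker : ∀ v : Fin n → ℝ, Q.mulVec v = 0 ↔ v ∈ LinearMap.range Xsᵀ.mulVecLin)
    (hNT : ∀ X ∈ M, P * X * Q = 0 → ∃ c : ℝ, X = c • Xs) :
    ∃ δ : ℝ, 0 < δ ∧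
      ∀ X ∈ M, X.rank ≤ r → frobNorm X = 1 → frobNorm (X - Xs) < δ → X = Xs := by
  classical
  -- rule out r = 0
  rcases Nat.eq_zero_or_pos r with hr0 | hrpos
  · exfalso
    have hbot : LinearMap.range Xs.mulVecLin = ⊥ :=
      Submodule.finrank_eq_zero.mp (by rw [← rank_def', hrank, hr0])
    have hXs0 : Xs = 0 := by
      ext i j
      have hm : (fun i => Xs i j) ∈ LinearMap.range Xs.mulVecLin :=
        ⟨Pi.single j 1, by ext i; simp [Matrix.mulVecLin, Matrix.mulVec_single]⟩
      rw [hbot] at hm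
      exact congrFun hm i
    rw [hXs0] at hnorm
    simp [frobNorm] at hnorm
  haveI : Nontrivial (Matrix (Fin r) (Fin r) ℝ) := by
    refine ⟨0, 1, fun h => ?_⟩
    have := congrFun (congrFun h ⟨0, hrpos⟩) ⟨0, hrpos⟩
    simp [Matrix.one_apply] at this
  -- basic vanishing facts
  have hPXs : P * Xs = 0 := by
    ext i j
    have hm : (fun i => Xs i j) ∈ LinearMap.range Xs.mulVecLin :=
      ⟨Pi.single j 1, by ext i; simp [Matrix.mulVecLin, Matrix.mulVec_single]⟩
    have h0 : P.mulVec (fun i => Xs i j) = 0 := (hPker _).mpr hm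
    have := congrFun h0 i
    simpa [Matrix.mul_apply, Matrix.mulVec, dotProduct] using this
  have hXsQ : Xs * Q = 0 := by
    have hQXst : Q * Xsᵀ = 0 := by
      ext i j
      have hm : (fun i => Xsᵀ i j) ∈ LinearMap.range Xsᵀ.mulVecLin :=
        ⟨Pi.single j 1, by ext i; simp [Matrix.mulVecLin, Matrix.mulVec_single]⟩
      have h0 : Q.mulVec (fun i => Xsᵀ i j) = 0 := (hQker _).mpr hm
      have := congrFun h0 i
      simpa [Matrix.mul_apply, Matrix.mulVec, dotProduct] using this
    have := congrArg Matrix.transpose hQXst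
    rwa [Matrix.transpose_mul, Matrix.transpose_transpose, hQsymm, Matrix.transpose_zero] at this
  have hXsnorm : ‖Xs‖ = 1 := by rw [← frobNorm_eq]; exact hnorm
  have hSqXs : ∑ i, ∑ j, (Xs i j) ^ 2 = 1 := by
    rw [sum_sq_eq_norm_sq, hXsnorm]; norm_num
  -- the linear functional ⟨Xs, ·⟩ and the map Y ↦ P Y Q
  set φ : Matrix (Fin m) (Fin n) ℝ →ₗ[ℝ] ℝ :=
    { toFun := fun Y => ∑ i, ∑ j, Xs i j * Y i j
      map_add' := fun Y Z => by
        simp [Matrix.add_apply, mul_add, Finset.sum_add_distrib]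
      map_smul' := fun t Y => by
        simp [Matrix.smul_apply, smul_eq_mul, Finset.mul_sum, mul_left_comm] } with hφ
  have hφXs : φ Xs = 1 := by
    simp only [hφ, LinearMap.coe_mk, AddHom.coe_mk]
    rw [← hSqXs]
    exact Finset.sum_congr rfl fun i _ => Finset.sum_congr rfl fun j _ => (pow_two (Xs i j)).symm
  set Lmap : Matrix (Fin m) (Fin n) ℝ →ₗ[ℝ] Matrix (Fin m) (Fin n) ℝ :=
    { toFun := fun Y => P * Y * Q
      map_add' := fun Y Z => by simp [Matrix.mul_add, Matrix.add_mul]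
      map_smul' := fun t Y => by simp [Matrix.mul_smul, Matrix.smul_mul] } with hLmap
  set N : Submodule ℝ (Matrix (Fin m) (Fin n) ℝ) := M ⊓ LinearMap.ker φ with hN
  set L : N →ₗ[ℝ] Matrix (Fin m) (Fin n) ℝ := Lmap.comp N.subtype with hL
  have hkerL : LinearMap.ker L = ⊥ := by
    rw [LinearMap.ker_eq_bot']
    intro W hW
    obtain ⟨hWM, hWφ⟩ := W.2
    have hPWQ : P * (W : Matrix (Fin m) (Fin n) ℝ) * Q = 0 := hW
    obtain ⟨cc, hcc⟩ := hNT _ hWM hPWQ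
    have hφW : φ (W : Matrix (Fin m) (Fin n) ℝ) = 0 := hWφ
    rw [hcc, _root_.map_smul, hφXs, smul_eq_mul, mul_one] at hφW
    apply Subtype.ext
    rw [hcc, hφW, zero_smul]
    rfl
  obtain ⟨K, hK0, hKa⟩ := L.exists_antilipschitzWith hkerL
  have hKb : ∀ W : N, ‖(W : Matrix (Fin m) (Fin n) ℝ)‖ ≤
      (K : ℝ) * ‖P * (W : Matrix (Fin m) (Fin n) ℝ) * Q‖ := by
    intro W
    have := hKa.le_mul_dist W 0
    have h' : ‖(W : Matrix (Fin m) (Fin n) ℝ)‖ ≤ (K : ℝ) * ‖L W‖ := by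
      simpa [dist_eq_norm, map_zero] using this
    exact h'
  -- core matrices
  obtain ⟨A, B, hcore⟩ := exists_core Xs hrank
  set u : (Matrix (Fin r) (Fin r) ℝ)ˣ := hcore.unit with hu
  have huval : (u : Matrix (Fin r) (Fin r) ℝ) = Aᵀ * Xs * B := rfl
  set g : ℝ := ‖((u⁻¹ : _ˣ) : Matrix (Fin r) (Fin r) ℝ)‖ with hg
  have hgpos : 0 < g := Units.norm_pos u⁻¹
  set onen : ℝ := ‖(1 : Matrix (Fin r) (Fin r) ℝ)‖ with honen
  set C₀ : ℝ := ‖Aᵀ‖ * ‖B‖ with hC₀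
  have hC₀0 : 0 ≤ C₀ := mul_nonneg (norm_nonneg _) (norm_nonneg _)
  set K₁ : ℝ := 2 * onen * g with hK₁
  set C₁ : ℝ := ‖P‖ * ‖B‖ * K₁ * (‖Aᵀ‖ * ‖Q‖) with hC₁
  have hK₁0 : 0 ≤ K₁ := by positivity
  have hC₁0 : 0 ≤ C₁ := by positivity
  set Kc : ℝ := 1 / 2 + (K : ℝ) * C₁ with hKc
  have hKc0 : 0 < Kc := by positivity
  refine ⟨min (1 / (2 * g * (C₀ + 1) + 1)) (1 / (Kc + 1)), by positivity, ?_⟩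
  intro X hXM hXrank hXnorm hXclose
  set e : Matrix (Fin m) (Fin n) ℝ := X - Xs with he
  have heM : e ∈ M := Submodule.sub_mem M hXM hXsM
  have hXe : X = Xs + e := by rw [he]; abel
  have hene : frobNorm e = ‖e‖ := frobNorm_eq e
  rw [hene] at hXclose
  have he0 : 0 ≤ ‖e‖ := norm_nonneg _
  have hd1 : ‖e‖ < 1 / (2 * g * (C₀ + 1) + 1) := lt_of_lt_of_le hXclose (min_le_left _ _)
  have hd2 : ‖e‖ < 1 / (Kc + 1) := lt_of_lt_of_le hXclose (min_le_right _ _)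
  -- bound on the perturbation of the core
  have hH : ‖Aᵀ * e * B‖ ≤ C₀ * ‖e‖ := by
    calc ‖Aᵀ * e * B‖ ≤ ‖Aᵀ‖ * ‖e‖ * ‖B‖ := norm3_bound _ _ _
    _ = C₀ * ‖e‖ := by rw [hC₀]; ring
  have hgC : g * ‖Aᵀ * e * B‖ ≤ 1 / 2 := by
    have h1 : g * (C₀ * ‖e‖) ≤ 1 / 2 := by
      have h2 : ‖e‖ * (2 * g * (C₀ + 1) + 1) < 1 := by
        rw [← lt_div_iff₀ (by positivity)]
        exact hd1
      nlinarith [mul_nonneg (mul_nonneg hgpos.le hC₀0) he0]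
    calc g * ‖Aᵀ * e * B‖ ≤ g * (C₀ * ‖e‖) :=
          mul_le_mul_of_nonneg_left hH hgpos.le
    _ ≤ 1 / 2 := h1
  have hHlt : ‖Aᵀ * e * B‖ < g⁻¹ := by
    rw [inv_eq_one_div, lt_div_iff₀ hgpos]
    nlinarith [hgC]
  -- the perturbed core is a unit with controlled inverse
  have hXcoreval : Aᵀ * X * B = (u : Matrix (Fin r) (Fin r) ℝ) + Aᵀ * e * B := by
    rw [huval, hXe]
    simp [Matrix.mul_add, Matrix.add_mul]
  set u' : (Matrix (Fin r) (Fin r) ℝ)ˣ := u.add (Aᵀ * e * B) (by rw [← hg]; exact hHlt)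
    with hu'
  have hu'val : (u' : Matrix (Fin r) (Fin r) ℝ) = Aᵀ * X * B := by
    rw [hu', Units.val_add, hXcoreval]
  set w : Matrix (Fin r) (Fin r) ℝ := ((u'⁻¹ : _ˣ) : Matrix (Fin r) (Fin r) ℝ) with hw
  have hXunit : IsUnit (Aᵀ * X * B) := by rw [← hu'val]; exact u'.isUnit
  have hwmul : w * (Aᵀ * X * B) = 1 := by rw [hw, ← hu'val]; exact u'.inv_mul
  have hG : (u : Matrix (Fin r) (Fin r) ℝ) * ((u⁻¹ : _ˣ) : Matrix (Fin r) (Fin r) ℝ) = 1 :=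
    u.mul_inv
  have hwe : w = (1 - w * (Aᵀ * e * B)) * ((u⁻¹ : _ˣ) : Matrix (Fin r) (Fin r) ℝ) := by
    have h1 : w * (u : Matrix (Fin r) (Fin r) ℝ) = 1 - w * (Aᵀ * e * B) := by
      have h2 := hwmul
      rw [hXcoreval, Matrix.mul_add] at h2
      exact eq_sub_of_add_eq h2
    calc w = w * ((u : Matrix (Fin r) (Fin r) ℝ) * ((u⁻¹ : _ˣ) : Matrix (Fin r) (Fin r) ℝ)) := by
          rw [hG, Matrix.mul_one]
    _ = (w * (u : Matrix (Fin r) (Fin r) ℝ)) * ((u⁻¹ : _ˣ) : Matrix (Fin r) (Fin r) ℝ) := by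
          rw [Matrix.mul_assoc]
    _ = (1 - w * (Aᵀ * e * B)) * ((u⁻¹ : _ˣ) : Matrix (Fin r) (Fin r) ℝ) := by rw [h1]
  have hwnorm : ‖w‖ ≤ K₁ := by
    have h1 : ‖w‖ ≤ (onen + ‖w‖ * ‖Aᵀ * e * B‖) * g := by
      calc ‖w‖ = ‖(1 - w * (Aᵀ * e * B)) * ((u⁻¹ : _ˣ) : Matrix (Fin r) (Fin r) ℝ)‖ := by
            rw [← hwe]
      _ ≤ ‖1 - w * (Aᵀ * e * B)‖ * g := by
            rw [hg]; exact Matrix.frobenius_norm_mul _ _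
      _ ≤ (‖(1 : Matrix (Fin r) (Fin r) ℝ)‖ + ‖w * (Aᵀ * e * B)‖) * g :=
            mul_le_mul_of_nonneg_right (norm_sub_le _ _) hgpos.le
      _ ≤ (onen + ‖w‖ * ‖Aᵀ * e * B‖) * g := by
            rw [honen]
            exact mul_le_mul_of_nonneg_right
              (add_le_add le_rfl (Matrix.frobenius_norm_mul _ _)) hgpos.le
    have h2 : ‖Aᵀ * e * B‖ * g ≤ 1 / 2 := by rw [mul_comm]; exact hgC
    have h3 : ‖w‖ * (‖Aᵀ * e * B‖ * g) ≤ ‖w‖ * (1 / 2) :=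
      mul_le_mul_of_nonneg_left h2 (norm_nonneg w)
    have h4 : (onen + ‖w‖ * ‖Aᵀ * e * B‖) * g = onen * g + ‖w‖ * (‖Aᵀ * e * B‖ * g) := by ring
    rw [h4] at h1
    rw [hK₁]
    linarith [h1, h3]
  have hinvnorm : ‖(Aᵀ * X * B)⁻¹‖ ≤ K₁ := by
    rw [← hu'val, ← Matrix.coe_units_inv, ← hw]
    exact hwnorm
  -- quadratic bound on P X Q
  have hPXB : P * X * B = P * e * B := by
    rw [hXe]
    simp [Matrix.mul_add, Matrix.add_mul, hPXs]
  have hAXQ : Aᵀ * X * Q = Aᵀ * e * Q := by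
    rw [hXe]
    simp only [Matrix.mul_add, Matrix.add_mul]
    rw [show Aᵀ * Xs * Q = Aᵀ * (Xs * Q) from Matrix.mul_assoc _ _ _, hXsQ,
      Matrix.mul_zero, zero_add]
  have hcur := cur_identity X A B hXrank hXunit
  have hPXQ : P * X * Q = (P * X * B) * (Aᵀ * X * B)⁻¹ * (Aᵀ * X * Q) := by
    conv_lhs => rw [hcur]
    simp only [Matrix.mul_assoc]
  rw [hPXB, hAXQ] at hPXQ
  have hPXQle : ‖P * X * Q‖ ≤ C₁ * (‖e‖ * ‖e‖) := by
    rw [hPXQ]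
    calc ‖(P * e * B) * (Aᵀ * X * B)⁻¹ * (Aᵀ * e * Q)‖
        ≤ ‖P * e * B‖ * ‖(Aᵀ * X * B)⁻¹‖ * ‖Aᵀ * e * Q‖ := norm3_bound _ _ _
    _ ≤ (‖P‖ * ‖e‖ * ‖B‖) * K₁ * (‖Aᵀ‖ * ‖e‖ * ‖Q‖) := by
          refine mul_le_mul (mul_le_mul (norm3_bound _ _ _) hinvnorm (norm_nonneg _)
            (by positivity)) (norm3_bound _ _ _) (norm_nonneg _) (by positivity)
    _ = C₁ * (‖e‖ * ‖e‖) := by rw [hC₁, hK₁]; ring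
  -- decomposition of e along Xs and its orthogonal complement in M
  set t : ℝ := φ e with ht
  have hφe' : φ e = ∑ i, ∑ j, Xs i j * e i j := rfl
  have hφe : φ e = -(‖e‖ ^ 2) / 2 := by
    have hSX : ∑ i, ∑ j, (X i j) ^ 2 = 1 := by
      rw [sum_sq_eq_norm_sq, ← frobNorm_eq, hXnorm]; norm_num
    have hSe : ∑ i, ∑ j, (e i j) ^ 2 = ‖e‖ ^ 2 := sum_sq_eq_norm_sq e
    have hXij : ∀ i j, X i j = Xs i j + e i j := by
      intro i j
      rw [hXe]; simp [Matrix.add_apply]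
    have hexp : ∑ i, ∑ j, (X i j) ^ 2 =
        (∑ i, ∑ j, (Xs i j) ^ 2) + 2 * (∑ i, ∑ j, Xs i j * e i j) + ∑ i, ∑ j, (e i j) ^ 2 := by
      calc ∑ i, ∑ j, (X i j) ^ 2
          = ∑ i, ∑ j, ((Xs i j) ^ 2 + 2 * (Xs i j * e i j) + (e i j) ^ 2) :=
            Finset.sum_congr rfl fun i _ => Finset.sum_congr rfl fun j _ => by
              rw [hXij i j]; ring
      _ = _ := by simp [Finset.sum_add_distrib, ← Finset.mul_sum]
    rw [hφe']
    rw [hSqXs] at hexp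
    rw [hSX, hSe] at hexp
    linarith
  set Wm : Matrix (Fin m) (Fin n) ℝ := e - t • Xs with hWm
  have hWmN : Wm ∈ N := by
    rw [hN]
    refine Submodule.mem_inf.mpr ⟨Submodule.sub_mem M heM (Submodule.smul_mem M t hXsM), ?_⟩
    rw [LinearMap.mem_ker, map_sub, LinearMap.map_smul, hφXs, smul_eq_mul, mul_one, ht, sub_self]
  have hPWQ : P * Wm * Q = P * X * Q := by
    rw [hWm, he]
    simp [Matrix.sub_mul, Matrix.mul_sub, Matrix.smul_mul, Matrix.mul_smul, hPXs]
  have hWmle : ‖Wm‖ ≤ (K : ℝ) * (C₁ * (‖e‖ * ‖e‖)) := by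
    have h := hKb ⟨Wm, hWmN⟩
    rw [show ((⟨Wm, hWmN⟩ : N) : Matrix (Fin m) (Fin n) ℝ) = Wm from rfl] at h
    rw [hPWQ] at h
    exact h.trans (mul_le_mul_of_nonneg_left hPXQle (by positivity))
  have htabs : |t| ≤ ‖e‖ * ‖e‖ / 2 := by
    rw [ht, hφe]
    rw [abs_div, abs_neg, abs_of_nonneg (sq_nonneg ‖e‖)]
    rw [show |(2 : ℝ)| = 2 by norm_num, pow_two]
  have hetri : ‖e‖ ≤ |t| * ‖Xs‖ + ‖Wm‖ := by
    have hdec : e = t • Xs + Wm := by rw [hWm]; abel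
    calc ‖e‖ = ‖t • Xs + Wm‖ := by rw [← hdec]
    _ ≤ ‖t • Xs‖ + ‖Wm‖ := norm_add_le _ _
    _ = |t| * ‖Xs‖ + ‖Wm‖ := by rw [norm_smul, Real.norm_eq_abs]
  rw [hXsnorm, mul_one] at hetri
  have hKce : Kc * ‖e‖ < 1 := by
    have h2 : ‖e‖ * (Kc + 1) < 1 := by
      rw [← lt_div_iff₀ (by positivity)]
      exact hd2
    have h3 : Kc * ‖e‖ ≤ ‖e‖ * (Kc + 1) := by
      have : ‖e‖ * (Kc + 1) = Kc * ‖e‖ + ‖e‖ := by ring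
      rw [this]
      linarith [he0]
    linarith
  have hee : ‖e‖ ≤ Kc * ‖e‖ * ‖e‖ := by
    calc ‖e‖ ≤ |t| + ‖Wm‖ := hetri
    _ ≤ ‖e‖ * ‖e‖ / 2 + (K : ℝ) * (C₁ * (‖e‖ * ‖e‖)) := add_le_add htabs hWmle
    _ = Kc * ‖e‖ * ‖e‖ := by rw [hKc]; ring
  have he00 : ‖e‖ = 0 := by
    refine le_antisymm ?_ he0
    by_contra hcon
    push_neg at hcon
    have h5 := mul_lt_mul_of_pos_right hKce hcon
    rw [one_mul] at h5
    linarith [hee]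
  have hez : e = 0 := norm_eq_zero.mp he00
  rw [he] at hez
  exact sub_eq_zero.mp hez
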